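/- Let α > 0, γ_P > 0, γ_I > 0, let Ψ, Ψ_f : ℝ → ℝ^{3×3} be continuous, and let ĩ, θ̃ : ℝ → ℝ³ be differentiable and satisfy ĩ'(t) = −α·ĩ(t) + Ψ(t)·θ̃(t) and θ̃'(t) = −γ_P·Ψ(t)ᵀ·ĩ(t) − γ_I·Ψ_f(t)ᵀ·Ψ_f(t)·θ̃(t). Then the observation error ĩ is square integrable: for every T ≥ 0, α·∫₀^T |ĩ(s)|² ds ≤ (1/2)|ĩ(0)|² + (1/(2γ_P))|θ̃(0)|². -/

import Mathlib

open Matrix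

theorem composite_identifier_error_square_integrable
    (α γP γI : ℝ) (hα : 0 < α) (hγP : 0 < γP) (hγI : 0 < γI)
    (Ψ Ψf : ℝ → Matrix (Fin 3) (Fin 3) ℝ)
    (hΨ : Continuous Ψ) (hΨf : Continuous Ψf)
    (itil θtil : ℝ → Fin 3 → ℝ)
    (hitil : ∀ t : ℝ, HasDerivAt itil (-α • itil t + Ψ t *ᵥ θtil t) t)
    (hθtil : ∀ t : ℝ, HasDerivAt θtil
      (-γP • ((Ψ t)ᵀ *ᵥ itil t) - γI • ((Ψf t)ᵀ *ᵥ (Ψf t *ᵥ θtil t))) t) :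
    ∀ T : ℝ, 0 ≤ T →
      α * ∫ s in (0:ℝ)..T, ∑ j : Fin 3, itil s j ^ 2
        ≤ (1 / 2) * ∑ j : Fin 3, itil 0 j ^ 2
          + (1 / (2 * γP)) * ∑ j : Fin 3, θtil 0 j ^ 2 := by
  intro T hT
  set V : ℝ → ℝ := fun t => (1/2) * ∑ j : Fin 3, itil t j ^ 2
      + (1/(2*γP)) * ∑ j : Fin 3, θtil t j ^ 2 with hV
  set W : ℝ → ℝ := fun t => α * ∑ j : Fin 3, itil t j ^ 2
      + (γI/γP) * ∑ j : Fin 3, (Ψf t *ᵥ θtil t) j ^ 2 with hW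
  have hxc : Continuous itil := continuous_iff_continuousAt.2 fun t => (hitil t).continuousAt
  have hyc : Continuous θtil := continuous_iff_continuousAt.2 fun t => (hθtil t).continuousAt
  have hfc : Continuous fun t => ∑ j : Fin 3, itil t j ^ 2 :=
    continuous_finset_sum _ fun j _ => ((continuous_apply j).comp hxc).pow 2
  have hg2c : Continuous fun t => ∑ j : Fin 3, (Ψf t *ᵥ θtil t) j ^ 2 := by
    apply continuous_finset_sum _ fun j _ => ?_
    apply Continuous.pow
    simp only [Matrix.mulVec, dotProduct]
    exact continuous_finset_sum _ fun k _ =>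
      ((continuous_apply k).comp ((continuous_apply j).comp hΨf)).mul
        ((continuous_apply k).comp hyc)
  have hWc : Continuous W := (continuous_const.mul hfc).add (continuous_const.mul hg2c)
  have hVderiv : ∀ t : ℝ, HasDerivAt V (-W t) t := by
    intro t
    have hxj : ∀ j : Fin 3, HasDerivAt (fun t => itil t j)
        ((-α • itil t + Ψ t *ᵥ θtil t) j) t := fun j => hasDerivAt_pi.1 (hitil t) j
    have hyj : ∀ j : Fin 3, HasDerivAt (fun t => θtil t j)
        ((-γP • ((Ψ t)ᵀ *ᵥ itil t) - γI • ((Ψf t)ᵀ *ᵥ (Ψf t *ᵥ θtil t))) j) t :=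
      fun j => hasDerivAt_pi.1 (hθtil t) j
    have h1 : HasDerivAt (fun t => ∑ j : Fin 3, itil t j ^ 2)
        (∑ j : Fin 3, 2 * itil t j ^ 1 * (-α • itil t + Ψ t *ᵥ θtil t) j) t :=
      HasDerivAt.fun_sum fun j _ => (hxj j).pow 2
    have h2 : HasDerivAt (fun t => ∑ j : Fin 3, θtil t j ^ 2)
        (∑ j : Fin 3, 2 * θtil t j ^ 1 *
          (-γP • ((Ψ t)ᵀ *ᵥ itil t) - γI • ((Ψf t)ᵀ *ᵥ (Ψf t *ᵥ θtil t))) j) t :=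
      HasDerivAt.fun_sum fun j _ => (hyj j).pow 2
    have := (h1.const_mul (1/2 : ℝ)).add (h2.const_mul (1/(2*γP) : ℝ))
    convert this using 1
    · rfl
    · rfl
    · rfl
    simp only [hW, Matrix.mulVec, dotProduct, Matrix.transpose_apply, Pi.add_apply,
      Pi.sub_apply, Pi.smul_apply, smul_eq_mul, Fin.sum_univ_three, pow_one]
    field_simp
    ring
  have hkey : ∫ s in (0:ℝ)..T, -W s = V T - V 0 :=
    intervalIntegral.integral_eq_sub_of_hasDerivAt (fun t _ => hVderiv t)
      (hWc.neg.intervalIntegrable 0 T)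
  have hWint : ∫ s in (0:ℝ)..T, W s = V 0 - V T := by
    have := hkey
    rw [intervalIntegral.integral_neg] at this
    linarith
  have hfint : IntervalIntegrable (fun s => ∑ j : Fin 3, itil s j ^ 2) MeasureTheory.volume 0 T :=
    hfc.intervalIntegrable 0 T
  have hg2int : IntervalIntegrable (fun s => ∑ j : Fin 3, (Ψf s *ᵥ θtil s) j ^ 2)
      MeasureTheory.volume 0 T := hg2c.intervalIntegrable 0 T
  have hsplit : ∫ s in (0:ℝ)..T, W s
      = α * (∫ s in (0:ℝ)..T, ∑ j : Fin 3, itil s j ^ 2)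
        + (γI/γP) * ∫ s in (0:ℝ)..T, ∑ j : Fin 3, (Ψf s *ᵥ θtil s) j ^ 2 := by
    simp only [hW]
    rw [intervalIntegral.integral_add (hfint.const_mul α) (hg2int.const_mul _),
      intervalIntegral.integral_const_mul, intervalIntegral.integral_const_mul]
  have hg2nn : 0 ≤ ∫ s in (0:ℝ)..T, ∑ j : Fin 3, (Ψf s *ᵥ θtil s) j ^ 2 :=
    intervalIntegral.integral_nonneg hT fun s _ =>
      Finset.sum_nonneg fun j _ => sq_nonneg _
  have hVT : 0 ≤ V T := by
    have h1 : (0:ℝ) ≤ ∑ j : Fin 3, itil T j ^ 2 :=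
      Finset.sum_nonneg fun j _ => sq_nonneg _
    have h2 : (0:ℝ) ≤ ∑ j : Fin 3, θtil T j ^ 2 :=
      Finset.sum_nonneg fun j _ => sq_nonneg _
    have : (0:ℝ) < 1/(2*γP) := by positivity
    simp only [hV]
    positivity
  have hratio : (0:ℝ) ≤ γI/γP := le_of_lt (by positivity)
  have hV0 : V 0 = (1 / 2) * ∑ j : Fin 3, itil 0 j ^ 2
      + (1 / (2 * γP)) * ∑ j : Fin 3, θtil 0 j ^ 2 := rfl
  have hprod := mul_nonneg hratio hg2nn
  clear_value V W
  linarith
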